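/- arXiv:1604.06869 — 2 statements merged into one kernel-verified Lean document; each statement's English description precedes it below -/
import Mathlib

section
/- Let D ⊆ V with D + Pδ = D and let τ be an ORG τ-function on D. Let ω ∈ ℂ, η ∈ ℂ and ε ∈ {1,−1} be such that [ζ+ω] = ε·e(η(ζ+ω/2))·[ζ] for all ζ ∈ ℂ (a quasi-period of [·]), where e(z) = exp(2π√−1 z). Then for every v ∈ P, the function τ̃(x) = e(S(x;v,ω))·τ(x−vω), where S(x;v,ω) = (η/(2δ²))·⟨v,x⟩·⟨x,x−vω⟩, is an ORG τ-function on D + vω. -/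
noncomputable section

/-- `V = ℂ^8`. -/
abbrev V8 : Type := Fin 8 → ℂ

/-- The symmetric bilinear form `⟨x,y⟩ = ∑ᵢ xᵢ yᵢ` on `V`. -/
def ip (x y : V8) : ℂ := ∑ i, x i * y i

/-- `φ = (1/2, …, 1/2)`. -/
def phi8 : V8 := fun _ => (1 : ℂ) / 2

/-- `x` has all coordinates in `ℤ`. -/
def IsIntVec (x : V8) : Prop := ∀ i, ∃ n : ℤ, x i = (n : ℂ)

/-- The `E₈` root lattice `P = {a ∈ ℤ⁸ ∪ (φ + ℤ⁸) : ⟨φ,a⟩ ∈ ℤ}`. -/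
def E8lat : Set V8 :=
  {a | (IsIntVec a ∨ IsIntVec (a - phi8)) ∧ ∃ n : ℤ, ip phi8 a = (n : ℂ)}

/-- A `C_l`-frame relative to `P`: a set `A = {±a₀, …, ±a_{l-1}}` with
`⟨aᵢ,aⱼ⟩ = δᵢⱼ`, `aᵢ ± aⱼ ∈ P` for `i < j`, and `2aᵢ ∈ P`. -/
def IsClFrame (l : ℕ) (A : Set V8) : Prop :=
  ∃ a : Fin l → V8,
    A = Set.range a ∪ Set.range (fun i => -a i) ∧
    (∀ i j, ip (a i) (a j) = if i = j then 1 else 0) ∧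
    (∀ i j, i < j → a i + a j ∈ E8lat ∧ a i - a j ∈ E8lat) ∧
    (∀ i, (2 : ℂ) • a i ∈ E8lat)

/-- The three-term relation `[β±γ][z±α] + [γ±α][z±β] + [α±β][z±γ] = 0`. -/
def ThreeTermRel (br : ℂ → ℂ) : Prop :=
  ∀ z α β γ : ℂ,
    br (β + γ) * br (β - γ) * (br (z + α) * br (z - α)) +
      br (γ + α) * br (γ - α) * (br (z + β) * br (z - β)) +
      br (α + β) * br (α - β) * (br (z + γ) * br (z - γ)) = 0

/-- `(a,b,c)` is a triple such that `{±a, ±b, ±c}` is a `C₃`-frame relative to `P`. -/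
def IsC3Triple (a b c : V8) : Prop :=
  ip a a = 1 ∧ ip b b = 1 ∧ ip c c = 1 ∧
  ip a b = 0 ∧ ip a c = 0 ∧ ip b c = 0 ∧
  a + b ∈ E8lat ∧ a - b ∈ E8lat ∧ a + c ∈ E8lat ∧ a - c ∈ E8lat ∧
  b + c ∈ E8lat ∧ b - c ∈ E8lat ∧
  (2 : ℂ) • a ∈ E8lat ∧ (2 : ℂ) • b ∈ E8lat ∧ (2 : ℂ) • c ∈ E8lat

/-- The non-autonomous Hirota equation `H(a,b,c)` at the point `x`. -/
def HirotaEq (br : ℂ → ℂ) (δ : ℂ) (τ : V8 → ℂ) (a b c x : V8) : Prop :=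
  br (ip (b + c) x) * br (ip (b - c) x) * (τ (x + δ • a) * τ (x - δ • a)) +
    br (ip (c + a) x) * br (ip (c - a) x) * (τ (x + δ • b) * τ (x - δ • b)) +
    br (ip (a + b) x) * br (ip (a - b) x) * (τ (x + δ • c) * τ (x - δ • c)) = 0

/-- `τ` is an ORG τ-function on `D`: the Hirota equation holds for every
`C₃`-frame `{±a,±b,±c}` and every `x` whose six shifts lie in `D`. -/
def IsORGTau (br : ℂ → ℂ) (δ : ℂ) (D : Set V8) (τ : V8 → ℂ) : Prop :=
  ∀ a b c : V8, IsC3Triple a b c → ∀ x : V8,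
    x + δ • a ∈ D → x - δ • a ∈ D → x + δ • b ∈ D → x - δ • b ∈ D →
    x + δ • c ∈ D → x - δ • c ∈ D → HirotaEq br δ τ a b c x

/-- `D + Pδ = D`. -/
def PShiftInvariant (δ : ℂ) (D : Set V8) : Prop :=
  ∀ v ∈ E8lat, ∀ x ∈ D, x + δ • v ∈ D

/-- `e(z) = exp(2π√−1 z)`. -/
def eFun (z : ℂ) : ℂ := Complex.exp (2 * (Real.pi : ℂ) * Complex.I * z)


lemma ip_comm (x y : V8) : ip x y = ip y x := by simp [ip, mul_comm]
lemma ip_add_left (x y z : V8) : ip (x+y) z = ip x z + ip y z := by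
  simp [ip, add_mul, Finset.sum_add_distrib]
lemma ip_sub_left (x y z : V8) : ip (x-y) z = ip x z - ip y z := by
  simp [ip, sub_mul, Finset.sum_sub_distrib]
lemma ip_add_right (x y z : V8) : ip x (y+z) = ip x y + ip x z := by
  simp [ip, mul_add, Finset.sum_add_distrib]
lemma ip_sub_right (x y z : V8) : ip x (y-z) = ip x y - ip x z := by
  simp [ip, mul_sub, Finset.sum_sub_distrib]
lemma ip_smul_left (c : ℂ) (x y : V8) : ip (c • x) y = c * ip x y := by
  simp only [ip, Pi.smul_apply, smul_eq_mul, Finset.mul_sum]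
  exact Finset.sum_congr rfl fun i _ => by ring
lemma ip_smul_right (c : ℂ) (x y : V8) : ip x (c • y) = c * ip x y := by
  simp only [ip, Pi.smul_apply, smul_eq_mul, Finset.mul_sum]
  exact Finset.sum_congr rfl fun i _ => by ring
lemma ip_phi_phi : ip phi8 phi8 = 2 := by
  simp [ip, phi8]
  norm_num

lemma eFun_add (x y : ℂ) : eFun (x + y) = eFun x * eFun y := by
  simp [eFun, mul_add, Complex.exp_add]
lemma eFun_zero : eFun 0 = 1 := by simp [eFun]
lemma eFun_ne_zero (x : ℂ) : eFun x ≠ 0 := Complex.exp_ne_zero _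

lemma ip_int_of_int {u w : V8} (hu : IsIntVec u) (hw : IsIntVec w) :
    ∃ n : ℤ, ip u w = (n : ℂ) := by
  choose n hn using hu
  choose m hm using hw
  exact ⟨∑ i, n i * m i, by
    simp only [ip]
    push_cast
    exact Finset.sum_congr rfl fun i _ => by rw [hn, hm]⟩

lemma E8_ip_int {u w : V8} (hu : u ∈ E8lat) (hw : w ∈ E8lat) :
    ∃ n : ℤ, ip u w = (n : ℂ) := by
  obtain ⟨hu1, nu, hnu⟩ := hu
  obtain ⟨hw1, nw, hnw⟩ := hw
  rcases hu1 with hu1 | hu1 <;> rcases hw1 with hw1 | hw1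
  · exact ip_int_of_int hu1 hw1
  · obtain ⟨k, hk⟩ := ip_int_of_int hu1 hw1
    refine ⟨k + nu, ?_⟩
    have h1 : ip u w = ip u (w - phi8) + ip u phi8 := by rw [ip_sub_right]; ring
    rw [h1, hk, ip_comm u phi8, hnu]; push_cast; ring
  · obtain ⟨k, hk⟩ := ip_int_of_int hu1 hw1
    refine ⟨k + nw, ?_⟩
    have h1 : ip u w = ip (u - phi8) w + ip phi8 w := by rw [ip_sub_left]; ring
    rw [h1, hk, hnw]; push_cast; ring
  · obtain ⟨k, hk⟩ := ip_int_of_int hu1 hw1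
    refine ⟨k + nu + nw - 2, ?_⟩
    have h1 : ip u w = ip (u - phi8) (w - phi8) + ip (u - phi8) phi8 + ip phi8 w := by
      simp only [ip_sub_left, ip_sub_right]; ring
    have h2 : ip (u - phi8) phi8 = (nu : ℂ) - 2 := by
      rw [ip_sub_left, ip_comm u phi8, hnu, ip_phi_phi]
    rw [h1, hk, h2, hnw]; push_cast; ring


lemma qp_int {br : ℂ → ℂ} {ω η ε : ℂ} (hεne : ε ≠ 0)
    (hqp : ∀ ζ : ℂ, br (ζ + ω) = ε * eFun (η * (ζ + ω / 2)) * br ζ) :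
    ∀ n : ℤ, ∀ ζ : ℂ, br (ζ + n * ω)
      = ε ^ n * eFun (η * (n * ζ + n ^ 2 * ω / 2)) * br ζ := by
  intro n
  induction n using Int.induction_on with
  | zero => intro ζ; norm_num [eFun]
  | succ i ih =>
    intro ζ
    have h1 : ζ + ((i : ℤ) + 1 : ℤ) * ω = (ζ + (i : ℤ) * ω) + ω := by push_cast; ring
    have h2 : eFun (η * ((ζ + (i : ℤ) * ω) + ω / 2)) * eFun (η * ((i : ℤ) * ζ + (i : ℤ) ^ 2 * ω / 2))
        = eFun (η * (((i : ℤ) + 1 : ℤ) * ζ + ((i : ℤ) + 1 : ℤ) ^ 2 * ω / 2)) := by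
      rw [← eFun_add]; congr 1; push_cast; ring
    rw [h1, hqp, ih, zpow_add_one₀ hεne, ← h2]; ring
  | pred i ih =>
    intro ζ
    have h2 := hqp (ζ + (-(i : ℤ) - 1 : ℤ) * ω)
    rw [show ζ + (-(i : ℤ) - 1 : ℤ) * ω + ω = ζ + (-(i : ℤ) : ℤ) * ω from by push_cast; ring,
      ih] at h2
    have hne : ε * eFun (η * ((ζ + (-(i : ℤ) - 1 : ℤ) * ω) + ω / 2)) ≠ 0 :=
      mul_ne_zero hεne (eFun_ne_zero _)
    apply mul_left_cancel₀ hne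
    rw [← h2]
    have h3 : eFun (η * ((ζ + (-(i : ℤ) - 1 : ℤ) * ω) + ω / 2)) *
        eFun (η * ((-(i : ℤ) - 1 : ℤ) * ζ + (-(i : ℤ) - 1 : ℤ) ^ 2 * ω / 2))
        = eFun (η * ((-(i : ℤ) : ℤ) * ζ + (-(i : ℤ) : ℤ) ^ 2 * ω / 2)) := by
      rw [← eFun_add]; congr 1; push_cast; ring
    have h4 : ε * ε ^ (-(i : ℤ) - 1 : ℤ) = ε ^ (-(i : ℤ) : ℤ) := by
      rw [mul_comm, ← zpow_add_one₀ hεne]; congr 1; ring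
    calc ε ^ (-(i:ℤ):ℤ) * eFun (η * ((-(i:ℤ):ℤ) * ζ + (-(i:ℤ):ℤ)^2 * ω/2)) * br ζ
        = (ε * ε ^ (-(i:ℤ)-1:ℤ)) * (eFun (η * ((ζ + (-(i:ℤ)-1:ℤ)*ω) + ω/2)) *
            eFun (η * ((-(i:ℤ)-1:ℤ) * ζ + (-(i:ℤ)-1:ℤ)^2 * ω/2))) * br ζ := by
          rw [h3, h4]
      _ = ε * eFun (η * ((ζ + (-(i:ℤ)-1:ℤ)*ω) + ω/2)) *
            (ε ^ (-(i:ℤ)-1:ℤ) * eFun (η * ((-(i:ℤ)-1:ℤ) * ζ + (-(i:ℤ)-1:ℤ)^2 * ω/2)) * br ζ) := by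
          ring

lemma zpow_parity {ε : ℂ} (hεne : ε ≠ 0) (hε2 : ε * ε = 1) (s t k : ℤ)
    (h : s + t = 2 * k) : ε ^ s = ε ^ t := by
  have h2 : ε ^ (2 : ℤ) = 1 := by rw [zpow_two, hε2]
  have hst : ε ^ s * ε ^ t = 1 := by
    rw [← zpow_add₀ hεne, h, zpow_mul, h2, one_zpow]
  have htt : ε ^ t * ε ^ t = 1 := by
    rw [← zpow_add₀ hεne, show t + t = 2 * t from by ring, zpow_mul, h2, one_zpow]
  calc ε ^ s = ε ^ s * (ε ^ t * ε ^ t) := by rw [htt, mul_one]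
    _ = (ε ^ s * ε ^ t) * ε ^ t := by ring
    _ = ε ^ t := by rw [hst, one_mul]

lemma key {br : ℂ → ℂ} {δ ω η ε : ℂ} (hδ : δ ≠ 0) (hεne : ε ≠ 0)
    (hqpz : ∀ n : ℤ, ∀ ζ : ℂ, br (ζ + n * ω)
      = ε ^ n * eFun (η * (n * ζ + n ^ 2 * ω / 2)) * br ζ)
    (τ : V8 → ℂ) (v x m u w : V8) (hmm : ip m m = 1)
    (N1 N2 : ℤ) (h1 : ip (u + w) v = (N1 : ℂ)) (h2 : ip (u - w) v = (N2 : ℂ)) :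
    br (ip (u + w) x) * br (ip (u - w) x) *
      ((eFun (η / (2 * δ ^ 2) * ip v (x + δ • m) * ip (x + δ • m) (x + δ • m - ω • v)) *
          τ (x + δ • m - ω • v)) *
        (eFun (η / (2 * δ ^ 2) * ip v (x - δ • m) * ip (x - δ • m) (x - δ • m - ω • v)) *
          τ (x - δ • m - ω • v)))
    = ε ^ (N1 + N2) * eFun (η * (ip v x * ip x (x - ω • v) / δ ^ 2 + ip v x
          + 2 * (ip m v * ip m x + ip u v * ip u x + ip w v * ip w x)
          - ω * (ip m v ^ 2 + ip u v ^ 2 + ip w v ^ 2)))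
      * (br (ip (u + w) (x - ω • v)) * br (ip (u - w) (x - ω • v))
          * (τ (x - ω • v + δ • m) * τ (x - ω • v - δ • m))) := by
  have harg1 : x + δ • m - ω • v = x - ω • v + δ • m := by
    funext i; simp [Pi.add_apply, Pi.sub_apply, Pi.smul_apply]; ring
  have harg2 : x - δ • m - ω • v = x - ω • v - δ • m := by
    funext i; simp [Pi.add_apply, Pi.sub_apply, Pi.smul_apply]; ring
  have e1 : ip (u + w) x = ip (u + w) (x - ω • v) + (N1 : ℂ) * ω := by
    rw [← h1]; simp only [ip_sub_right, ip_smul_right, ip_comm (u+w) v]; ring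
  have e2 : ip (u - w) x = ip (u - w) (x - ω • v) + (N2 : ℂ) * ω := by
    rw [← h2]; simp only [ip_sub_right, ip_smul_right, ip_comm (u-w) v]; ring
  rw [harg1, harg2, e1, e2, hqpz N1, hqpz N2, zpow_add₀ hεne]
  have hE : eFun (η * ((N1:ℂ) * ip (u + w) (x - ω • v) + (N1:ℂ) ^ 2 * ω / 2)) *
      eFun (η * ((N2:ℂ) * ip (u - w) (x - ω • v) + (N2:ℂ) ^ 2 * ω / 2)) *
      (eFun (η / (2 * δ ^ 2) * ip v (x + δ • m) * ip (x + δ • m) (x + δ • m - ω • v)) *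
        eFun (η / (2 * δ ^ 2) * ip v (x - δ • m) * ip (x - δ • m) (x - δ • m - ω • v)))
      = eFun (η * (ip v x * ip x (x - ω • v) / δ ^ 2 + ip v x
          + 2 * (ip m v * ip m x + ip u v * ip u x + ip w v * ip w x)
          - ω * (ip m v ^ 2 + ip u v ^ 2 + ip w v ^ 2))) := by
    rw [← eFun_add, ← eFun_add, ← eFun_add]
    congr 1
    rw [← h1, ← h2]
    simp only [ip_add_left, ip_sub_left, ip_add_right, ip_sub_right, ip_smul_left,
      ip_smul_right, hmm, ip_comm x m, ip_comm x v, ip_comm v m, ip_comm u v, ip_comm w v,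
      ip_comm x u, ip_comm x w]
    field_simp
    ring
  rw [← hE]
  ring

/-- Theorem 2.4 (3): translation of an ORG τ-function by `vω` (`v ∈ P`, `ω` a
quasi-period of `[·]` with factor `[ζ+ω] = ε·e(η(ζ+ω/2))·[ζ]`, `ε = ±1`), corrected by
the gauge factor `e(S(x;v,ω))` with `S(x;v,ω) = (η/(2δ²))⟨v,x⟩⟨x,x−vω⟩`, is an
ORG τ-function on `D + vω`. -/
theorem statement5 (br : ℂ → ℂ) (hbr_ne : br ≠ 0) (hbr_ent : Differentiable ℂ br)
    (hbr3 : ThreeTermRel br) (δ : ℂ) (hδ : δ ≠ 0)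
    (D : Set V8) (hD : PShiftInvariant δ D)
    (τ : V8 → ℂ) (hτ : IsORGTau br δ D τ)
    (ω η ε : ℂ) (hε : ε = 1 ∨ ε = -1)
    (hqp : ∀ ζ : ℂ, br (ζ + ω) = ε * eFun (η * (ζ + ω / 2)) * br ζ)
    (v : V8) (hv : v ∈ E8lat) :
    IsORGTau br δ ((fun x => x + ω • v) '' D)
      (fun x => eFun (η / (2 * δ ^ 2) * ip v x * ip x (x - ω • v)) * τ (x - ω • v)) := by
  have hεne : ε ≠ 0 := by rcases hε with h | h <;> simp [h]
  have hε2 : ε * ε = 1 := by rcases hε with h | h <;> simp [h]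
  have hqpz := qp_int hεne hqp
  intro a b c ht x hxa1 hxa2 hxb1 hxb2 hxc1 hxc2
  obtain ⟨haa, hbb, hcc, hab, hac, hbc, hPab, hPab', hPac, hPac', hPbc, hPbc',
    h2a, h2b, h2c⟩ := ht
  have mem : ∀ z : V8, z ∈ (fun y => y + ω • v) '' D → z - ω • v ∈ D := by
    rintro z ⟨y, hy, rfl⟩
    simpa using hy
  have memp : ∀ u : V8, x + δ • u ∈ (fun y => y + ω • v) '' D → x - ω • v + δ • u ∈ D := by
    intro u h
    have h' := mem _ h
    rwa [show x + δ • u - ω • v = x - ω • v + δ • u from by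
      funext i; simp [Pi.add_apply, Pi.sub_apply, Pi.smul_apply]; ring] at h'
  have memm : ∀ u : V8, x - δ • u ∈ (fun y => y + ω • v) '' D → x - ω • v - δ • u ∈ D := by
    intro u h
    have h' := mem _ h
    rwa [show x - δ • u - ω • v = x - ω • v - δ • u from by
      funext i; simp [Pi.add_apply, Pi.sub_apply, Pi.smul_apply]; ring] at h'
  have H := hτ a b c ⟨haa, hbb, hcc, hab, hac, hbc, hPab, hPab', hPac, hPac', hPbc, hPbc',
      h2a, h2b, h2c⟩ (x - ω • v) (memp a hxa1) (memm a hxa2) (memp b hxb1) (memm b hxb2)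
      (memp c hxc1) (memm c hxc2)
  -- integers
  obtain ⟨Nbc, hNbc⟩ := E8_ip_int hPbc hv
  obtain ⟨Nbc', hNbc'⟩ := E8_ip_int hPbc' hv
  have hPca : c + a ∈ E8lat := by rwa [add_comm] at hPac
  obtain ⟨Nca, hNca⟩ := E8_ip_int hPca hv
  obtain ⟨M, hM⟩ := E8_ip_int hPac' hv
  have hNca' : ip (c - a) v = ((-M : ℤ) : ℂ) := by
    have : ip (c - a) v = -(ip (a - c) v) := by simp only [ip_sub_left]; ring
    rw [this, hM]; push_cast; ring
  set Nca' : ℤ := -M with hNca'def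
  obtain ⟨Nab, hNab⟩ := E8_ip_int hPab hv
  obtain ⟨Nab', hNab'⟩ := E8_ip_int hPab' hv
  have K1 := key hδ hεne hqpz τ v x a b c haa Nbc Nbc' hNbc hNbc'
  have K2 := key hδ hεne hqpz τ v x b c a hbb Nca Nca' hNca hNca'
  have K3 := key hδ hεne hqpz τ v x c a b hcc Nab Nab' hNab hNab'
  -- signs
  have sum1 : Nca + Nca' + (Nbc + Nbc') = 2 * Nbc := by
    have hcast : ((Nca + Nca' + (Nbc + Nbc') : ℤ) : ℂ) = ((2 * Nbc : ℤ) : ℂ) := by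
      push_cast
      rw [← hNca, ← hNca', ← hNbc, ← hNbc']
      simp only [ip_add_left, ip_sub_left]
      push_cast
      ring
    exact_mod_cast hcast
  have sum2 : Nab + Nab' + (Nbc + Nbc') = 2 * Nab := by
    have hcast : ((Nab + Nab' + (Nbc + Nbc') : ℤ) : ℂ) = ((2 * Nab : ℤ) : ℂ) := by
      push_cast
      rw [← hNab, ← hNab', ← hNbc, ← hNbc']
      simp only [ip_add_left, ip_sub_left]
      push_cast
      ring
    exact_mod_cast hcast
  have sign1 : ε ^ (Nca + Nca') = ε ^ (Nbc + Nbc') := zpow_parity hεne hε2 _ _ _ sum1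
  have sign2 : ε ^ (Nab + Nab') = ε ^ (Nbc + Nbc') := zpow_parity hεne hε2 _ _ _ sum2
  -- exponent equalities
  have hE2 : eFun (η * (ip v x * ip x (x - ω • v) / δ ^ 2 + ip v x
        + 2 * (ip b v * ip b x + ip c v * ip c x + ip a v * ip a x)
        - ω * (ip b v ^ 2 + ip c v ^ 2 + ip a v ^ 2)))
      = eFun (η * (ip v x * ip x (x - ω • v) / δ ^ 2 + ip v x
        + 2 * (ip a v * ip a x + ip b v * ip b x + ip c v * ip c x)
        - ω * (ip a v ^ 2 + ip b v ^ 2 + ip c v ^ 2))) := by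
    congr 1; ring
  have hE3 : eFun (η * (ip v x * ip x (x - ω • v) / δ ^ 2 + ip v x
        + 2 * (ip c v * ip c x + ip a v * ip a x + ip b v * ip b x)
        - ω * (ip c v ^ 2 + ip a v ^ 2 + ip b v ^ 2)))
      = eFun (η * (ip v x * ip x (x - ω • v) / δ ^ 2 + ip v x
        + 2 * (ip a v * ip a x + ip b v * ip b x + ip c v * ip c x)
        - ω * (ip a v ^ 2 + ip b v ^ 2 + ip c v ^ 2))) := by
    congr 1; ring
  simp only [HirotaEq] at H ⊢
  rw [K1, K2, K3, sign1, sign2, hE2, hE3]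
  linear_combination (ε ^ (Nbc + Nbc') *
    eFun (η * (ip v x * ip x (x - ω • v) / δ ^ 2 + ip v x
        + 2 * (ip a v * ip a x + ip b v * ip b x + ip c v * ip c x)
        - ω * (ip a v ^ 2 + ip b v ^ 2 + ip c v ^ 2)))) * H
end
end

section
/- (Pointwise form of the implication (B) ⇒ (C1) in the recursion theorem, Theorem 3.3.) Let a_0, a_1, a_2, a_3 ∈ V, δ ∈ ℂ, x ∈ V, and let F, G, H : V → ℂ be functions. Assume [⟨a_2+a_3,x⟩]·[⟨a_2−a_3,x⟩] ≠ 0, and that for k = 0 and k = 1 the Toda-type bilinear relation holds: [⟨a_2+a_3,x⟩][⟨a_2−a_3,x⟩]·H(x+a_kδ)·F(x−a_kδ) = [⟨a_k+a_3,x⟩][⟨a_k−a_3,x⟩]·G(x+a_2δ)G(x−a_2δ) − [⟨a_k+a_2,x⟩][⟨a_k−a_2,x⟩]·G(x+a_3δ)G(x−a_3δ). Then the type-(II_2) bilinear relation follows: [⟨a_1+a_2,x⟩][⟨a_1−a_2,x⟩]·H(x+a_0δ)·F(x−a_0δ) − [⟨a_0+a_2,x⟩][⟨a_0−a_2,x⟩]·H(x+a_1δ)·F(x−a_1δ)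 = [⟨a_1+a_0,x⟩][⟨a_1−a_0,x⟩]·G(x+a_2δ)G(x−a_2δ). -/
noncomputable section

lemma br_odd (br : ℂ → ℂ) (hbr_ne : br ≠ 0) (hbr_ent : Differentiable ℂ br)
    (hbr3 : ∀ z α β γ : ℂ,
    br (β + γ) * br (β - γ) * (br (z + α) * br (z - α)) +
      br (γ + α) * br (γ - α) * (br (z + β) * br (z - β)) +
      br (α + β) * br (α - β) * (br (z + γ) * br (z - γ)) = 0) :
    ∀ v : ℂ, br (-v) = - br v := by
  have hana : AnalyticOnNhd ℂ br Set.univ :=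
    hbr_ent.differentiableOn.analyticOnNhd isOpen_univ
  have h0 : br 0 = 0 := by
    have := hbr3 0 0 0 0
    simp only [add_zero, sub_zero] at this
    have h4 : br 0 ^ 4 = 0 := by linear_combination this / 3
    exact pow_eq_zero_iff (by norm_num) |>.mp h4
  obtain ⟨w0, hw0⟩ : ∃ w, br w ≠ 0 := Function.ne_iff.mp hbr_ne
  -- key: for any α, there is z with br(z+α) * br(z-α) ≠ 0
  have key : ∀ α : ℂ, ∃ z, br (z + α) * br (z - α) ≠ 0 := by
    intro α
    by_contra hc
    push_neg at hc
    have hopen : IsOpen {w : ℂ | br w ≠ 0} :=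
      isOpen_compl_singleton.preimage hbr_ent.continuous
    have hev : br =ᶠ[nhds (w0 - 2 * α)] 0 := by
      have hmem : {w : ℂ | br (w + 2 * α) ≠ 0} ∈ nhds (w0 - 2 * α) := by
        have : IsOpen {w : ℂ | br (w + 2 * α) ≠ 0} :=
          hopen.preimage (by fun_prop)
        exact this.mem_nhds (by simpa using hw0)
      filter_upwards [hmem] with w hw
      have := hc (w + α)
      have h1 : br (w + α + α) = br (w + 2 * α) := by ring_nf
      rw [show w + α - α = w by ring, h1] at this
      exact (mul_eq_zero.mp this).resolve_left hw
    have := hana.eqOn_zero_of_preconnected_of_eventuallyEq_zero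
      isPreconnected_univ (Set.mem_univ _) hev (Set.mem_univ w0)
    exact hw0 this
  -- now for all α β : br(α+β) * (br(β-α) + br(α-β)) = 0
  have hprod : ∀ α β : ℂ, br (α + β) * (br (β - α) + br (α - β)) = 0 := by
    intro α β
    obtain ⟨z, hz⟩ := key α
    have h := hbr3 z α β α
    have h' : br (z + α) * br (z - α) * (br (α + β) * (br (β - α) + br (α - β))) = 0 := by
      rw [add_comm β α, sub_self, h0] at h
      linear_combination h
    exact (mul_eq_zero.mp h').resolve_left hz
  intro v
  obtain ⟨u, hu⟩ : ∃ u, br u ≠ 0 := Function.ne_iff.mp hbr_ne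
  have := hprod ((u - v) / 2) ((u + v) / 2)
  rw [show (u - v)/2 + (u + v)/2 = u by ring, show (u + v)/2 - (u - v)/2 = v by ring,
    show (u - v)/2 - (u + v)/2 = -v by ring] at this
  have h2 : br v + br (-v) = 0 := by
    rcases mul_eq_zero.mp this with h | h
    · exact absurd h hu
    · exact h
  linear_combination h2

lemma ip_add' (a b x : V8) : ip (a + b) x = ip a x + ip b x := by
  simp [ip, add_mul, Finset.sum_add_distrib]

lemma ip_sub' (a b x : V8) : ip (a - b) x = ip a x - ip b x := by
  simp [ip, sub_mul, Finset.sum_sub_distrib]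

/-- Pointwise form of the implication (B) ⇒ (C1) in Theorem 3.3: the two Toda-type
bilinear relations (for `k = 0, 1`) imply the type-(II₂) bilinear relation. -/
theorem statement19 (br : ℂ → ℂ) (hbr_ne : br ≠ 0) (hbr_ent : Differentiable ℂ br)
    (hbr3 : ThreeTermRel br)
    (a0 a1 a2 a3 : V8) (δ : ℂ) (x : V8) (F G H : V8 → ℂ)
    (hgen : br (ip (a2 + a3) x) * br (ip (a2 - a3) x) ≠ 0)
    (h0 : br (ip (a2 + a3) x) * br (ip (a2 - a3) x) * (H (x + δ • a0) * F (x - δ • a0)) =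
      br (ip (a0 + a3) x) * br (ip (a0 - a3) x) * (G (x + δ • a2) * G (x - δ • a2)) -
        br (ip (a0 + a2) x) * br (ip (a0 - a2) x) * (G (x + δ • a3) * G (x - δ • a3)))
    (h1 : br (ip (a2 + a3) x) * br (ip (a2 - a3) x) * (H (x + δ • a1) * F (x - δ • a1)) =
      br (ip (a1 + a3) x) * br (ip (a1 - a3) x) * (G (x + δ • a2) * G (x - δ • a2)) -
        br (ip (a1 + a2) x) * br (ip (a1 - a2) x) * (G (x + δ • a3) * G (x - δ • a3))) :
    br (ip (a1 + a2) x) * br (ip (a1 - a2) x) * (H (x + δ • a0) * F (x - δ • a0)) -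
      br (ip (a0 + a2) x) * br (ip (a0 - a2) x) * (H (x + δ • a1) * F (x - δ • a1)) =
      br (ip (a1 + a0) x) * br (ip (a1 - a0) x) * (G (x + δ • a2) * G (x - δ • a2)) := by
  have hodd := br_odd br hbr_ne hbr_ent hbr3
  simp only [ip_add', ip_sub'] at hgen h0 h1 ⊢
  set p0 := ip a0 x
  set p1 := ip a1 x
  set p2 := ip a2 x
  set p3 := ip a3 x
  have E' : br (p1+p2) * br (p1-p2) * (br (p0+p3) * br (p0-p3)) -
      br (p0+p2) * br (p0-p2) * (br (p1+p3) * br (p1-p3)) =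
      br (p1+p0) * br (p1-p0) * (br (p2+p3) * br (p2-p3)) := by
    have hE := hbr3 p3 p0 p1 p2
    rw [show p3+p0 = p0+p3 by ring, show p3-p0 = -(p0-p3) by ring, hodd,
        show p2+p0 = p0+p2 by ring, show p2-p0 = -(p0-p2) by ring, hodd,
        show p3+p1 = p1+p3 by ring, show p3-p1 = -(p1-p3) by ring, hodd,
        show p0+p1 = p1+p0 by ring, show p0-p1 = -(p1-p0) by ring, hodd,
        show p3+p2 = p2+p3 by ring, show p3-p2 = -(p2-p3) by ring, hodd] at hE
    linear_combination -hE
  apply mul_left_cancel₀ hgen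
  linear_combination br (p1+p2) * br (p1-p2) * h0 - br (p0+p2) * br (p0-p2) * h1 +
    (G (x + δ • a2) * G (x - δ • a2)) * E'
end
end
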